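/- Let (P, ≤, ·, P#) be a partial combinatory algebra. Let DP be the complete lattice of downward-closed subsets of P ordered by inclusion, and define X → Y := { z ∈ P | for all x ∈ X, z·x is defined and z·x ∈ Y }. Then (DP, ⊆, →) is an arrow structure that is compatible with joins (i.e., (⨆_{X ∈ B} X) → Y = ⨅_{X ∈ B} (X → Y) for all families B ⊆ DP and Y ∈ DP), and S := { X ∈ DP | X ∩ P# ≠ ∅ } is a separator on it: S is upward closed, closed under modus ponens, and contains the combinators 𝐤, 𝐬 and 𝐚 of this arrow structure. -/

import Mathlib

/-- The combinator 𝐤 := ⨅ a b, a → (b → a). -/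
def kC {A : Type*} [CompleteLattice A] (arr : A → A → A) : A :=
  ⨅ (a : A) (b : A), arr a (arr b a)

/-- The combinator 𝐬 := ⨅ a b c, (a → (b → c)) → ((a → b) → (a → c)). -/
def sC {A : Type*} [CompleteLattice A] (arr : A → A → A) : A :=
  ⨅ (a : A) (b : A) (c : A),
    arr (arr a (arr b c)) (arr (arr a b) (arr a c))

/-- The combinator 𝐚 := ⨅_{x, B ⊆ Im(→)} (⨅_{b ∈ B} x → b) → (x → ⨅ B). -/
def aC {A : Type*} [CompleteLattice A] (arr : A → A → A) : A :=
  ⨅ (x : A) (B : Set A) (_ : B ⊆ Set.range fun p : A × A => arr p.1 p.2),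
    arr (⨅ b ∈ B, arr x b) (arr x (sInf B))

/-- An arrow structure on a complete lattice: the implication is antitone in its
first argument and monotone in its second. -/
structure IsArrow {A : Type*} [CompleteLattice A] (arr : A → A → A) : Prop where
  mono : ∀ {a a' b b' : A}, a' ≤ a → b ≤ b' → arr a b ≤ arr a' b'

/-- A separator on an arrow structure. -/
structure IsSeparator {A : Type*} [CompleteLattice A] (arr : A → A → A) (S : Set A) : Prop where
  up : ∀ {a b : A}, a ∈ S → a ≤ b → b ∈ S
  mp : ∀ {a b : A}, arr a b ∈ S → a ∈ S → b ∈ S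
  kmem : kC arr ∈ S
  smem : sC arr ∈ S
  amem : aC arr ∈ S

/-- A partial combinatory algebra on a poset, with a filter. -/
structure PCA (P : Type*) [PartialOrder P] where
  app : P → P → Option P
  mono : ∀ {a a' b b' x : P}, app a' b' = some x → a ≤ a' → b ≤ b' →
    ∃ y, app a b = some y ∧ y ≤ x
  filt : Set P
  filt_up : ∀ {a b : P}, a ∈ filt → a ≤ b → b ∈ filt
  filt_app : ∀ {a b c : P}, a ∈ filt → b ∈ filt → app a b = some c → c ∈ filt
  k : P
  s : P
  k_mem : k ∈ filt
  s_mem : s ∈ filt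
  k_spec : ∀ a b : P, ∃ ka, app k a = some ka ∧ app ka b = some a
  s_def : ∀ a b : P, ∃ sa sab, app s a = some sa ∧ app sa b = some sab
  s_spec : ∀ {a b c ac bc x sa sab : P}, app a c = some ac → app b c = some bc →
    app ac bc = some x → app s a = some sa → app sa b = some sab →
    ∃ y, app sab c = some y ∧ y ≤ x

/-- The implication on the complete lattice of downward closed subsets of a pca:
`X → Y := { z | ∀ x ∈ X, z·x is defined and z·x ∈ Y }`. -/
def pcaArr {P : Type*} [PartialOrder P] (Q : PCA P) (X Y : LowerSet P) : LowerSet P :=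
  ⟨{z | ∀ x ∈ X, ∃ w, Q.app z x = some w ∧ w ∈ Y}, by
    intro a b hba ha x hx
    obtain ⟨w, hw, hwY⟩ := ha x hx
    obtain ⟨w', hw', hle⟩ := Q.mono hw hba le_rfl
    exact ⟨w', hw', Y.lower hle hwY⟩⟩

section Aux

variable {P : Type*} [PartialOrder P]

/-- Untyped terms over `P` with natural-number variables. -/
inductive Tm (P : Type*) : Type _
  | var : ℕ → Tm P
  | cst : P → Tm P
  | app : Tm P → Tm P → Tm P

/-- Evaluation of a term in an environment. -/
def Tm.eval (Q : PCA P) : Tm P → (ℕ → P) → Option P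
  | .var i, ρ => some (ρ i)
  | .cst c, _ => some c
  | .app M N, ρ => do
      let m ← M.eval Q ρ
      let n ← N.eval Q ρ
      Q.app m n

/-- All constants of a term lie in the filter. -/
def Tm.Good (Q : PCA P) : Tm P → Prop
  | .var _ => True
  | .cst c => c ∈ Q.filt
  | .app M N => M.Good Q ∧ N.Good Q

/-- Combinatory abstraction of variable `0`. -/
def Tm.abs (Q : PCA P) : Tm P → Tm P
  | .var 0 => .app (.app (.cst Q.s) (.cst Q.k)) (.cst Q.k)
  | .var (j+1) => .app (.cst Q.k) (.var j)
  | .cst c => .app (.cst Q.k) (.cst c)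
  | .app M N => .app (.app (.cst Q.s) (M.abs Q)) (N.abs Q)

/-- Environment extension. -/
def envCons (a : P) (ρ : ℕ → P) : ℕ → P
  | 0 => a
  | j+1 => ρ j

lemma skk_app (Q : PCA P) {sk i : P} (h1 : Q.app Q.s Q.k = some sk)
    (h2 : Q.app sk Q.k = some i) (a : P) : ∃ y, Q.app i a = some y ∧ y ≤ a := by
  obtain ⟨ka, hka, hkaa⟩ := Q.k_spec a a
  obtain ⟨ka', hka', hk2⟩ := Q.k_spec a ka
  rw [hka] at hka'
  obtain rfl : ka' = ka := Option.some.inj hka'.symm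
  exact Q.s_spec hka hka hk2 h1 h2

lemma abs_defined (Q : PCA P) (M : Tm P) (ρ : ℕ → P) :
    ∃ m, (M.abs Q).eval Q ρ = some m := by
  induction M with
  | var i =>
    match i with
    | 0 =>
      obtain ⟨sk, skk, h1, h2⟩ := Q.s_def Q.k Q.k
      exact ⟨skk, by simp [Tm.abs, Tm.eval, h1, h2]⟩
    | j+1 =>
      obtain ⟨kr, h1, _⟩ := Q.k_spec (ρ j) (ρ j)
      exact ⟨kr, by simp [Tm.abs, Tm.eval, h1]⟩
  | cst c =>
    obtain ⟨kc, h1, _⟩ := Q.k_spec c c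
    exact ⟨kc, by simp [Tm.abs, Tm.eval, h1]⟩
  | app M N ihM ihN =>
    obtain ⟨m, hm⟩ := ihM
    obtain ⟨n, hn⟩ := ihN
    obtain ⟨sm, smn, h1, h2⟩ := Q.s_def m n
    exact ⟨smn, by simp [Tm.abs, Tm.eval, hm, hn, h1, h2]⟩

lemma abs_beta (Q : PCA P) (M : Tm P) (ρ : ℕ → P) (a : P) {v : P}
    (hv : M.eval Q (envCons a ρ) = some v) :
    ∃ m w, (M.abs Q).eval Q ρ = some m ∧ Q.app m a = some w ∧ w ≤ v := by
  induction M generalizing v with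
  | var i =>
    match i with
    | 0 =>
      obtain rfl : a = v := Option.some.inj hv
      obtain ⟨sk, skk, h1, h2⟩ := Q.s_def Q.k Q.k
      obtain ⟨y, hy, hya⟩ := skk_app Q h1 h2 a
      exact ⟨skk, y, by simp [Tm.abs, Tm.eval, h1, h2], hy, hya⟩
    | j+1 =>
      obtain rfl : ρ j = v := Option.some.inj hv
      obtain ⟨kr, h1, h2⟩ := Q.k_spec (ρ j) a
      exact ⟨kr, ρ j, by simp [Tm.abs, Tm.eval, h1], h2, le_rfl⟩
  | cst c =>
    obtain rfl : c = v := Option.some.inj hv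
    obtain ⟨kc, h1, h2⟩ := Q.k_spec c a
    exact ⟨kc, c, by simp [Tm.abs, Tm.eval, h1], h2, le_rfl⟩
  | app M N ihM ihN =>
    simp only [Tm.eval, Option.bind_eq_bind, Option.bind_eq_some_iff] at hv
    obtain ⟨vm, hvm, vn, hvn, hap⟩ := hv
    obtain ⟨m, wm, hm, hma, hwm⟩ := ihM hvm
    obtain ⟨n, wn, hn, hna, hwn⟩ := ihN hvn
    obtain ⟨x, hx, hxv⟩ := Q.mono hap hwm hwn
    obtain ⟨sm, smn, h1, h2⟩ := Q.s_def m n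
    obtain ⟨y, hy, hyx⟩ := Q.s_spec hma hna hx h1 h2
    exact ⟨smn, y, by simp [Tm.abs, Tm.eval, hm, hn, h1, h2], hy, hyx.trans hxv⟩

lemma abs_good (Q : PCA P) (M : Tm P) (h : M.Good Q) : (M.abs Q).Good Q := by
  induction M with
  | var i =>
    match i with
    | 0 => exact ⟨⟨Q.s_mem, Q.k_mem⟩, Q.k_mem⟩
    | j+1 => exact ⟨Q.k_mem, trivial⟩
  | cst c => exact ⟨Q.k_mem, h⟩
  | app M N ihM ihN => exact ⟨⟨Q.s_mem, ihM h.1⟩, ihN h.2⟩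

lemma eval_good (Q : PCA P) (M : Tm P) (h : M.Good Q) (ρ : ℕ → P)
    (hρ : ∀ i, ρ i ∈ Q.filt) {v : P} (hv : M.eval Q ρ = some v) : v ∈ Q.filt := by
  induction M generalizing v with
  | var i => exact (Option.some.inj hv) ▸ hρ i
  | cst c => exact (Option.some.inj hv) ▸ h
  | app M N ihM ihN =>
    simp only [Tm.eval, Option.bind_eq_bind, Option.bind_eq_some_iff] at hv
    obtain ⟨vm, hvm, vn, hvn, hap⟩ := hv
    exact Q.filt_app (ihM h.1 hvm) (ihN h.2 hvn) hap

lemma mem_pcaArr {Q : PCA P} {X Y : LowerSet P} {z : P} :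
    z ∈ pcaArr Q X Y ↔ ∀ x ∈ X, ∃ w, Q.app z x = some w ∧ w ∈ Y := Iff.rfl

end Aux

/-- Theorem 3.10: the downsets of a pca form an arrow structure which is compatible
with joins, and the downsets meeting the filter form a separator on it. -/
theorem stmt2 {P : Type*} [PartialOrder P] (Q : PCA P) :
    IsArrow (pcaArr Q) ∧
    (∀ (B : Set (LowerSet P)) (Y : LowerSet P),
      pcaArr Q (sSup B) Y = ⨅ X ∈ B, pcaArr Q X Y) ∧
    IsSeparator (pcaArr Q) {X : LowerSet P | ∃ p ∈ Q.filt, p ∈ X} := by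
  obtain ⟨sk0, i0, hsk0, hi0⟩ := Q.s_def Q.k Q.k
  have harrow : IsArrow (pcaArr Q) := by
    constructor
    intro a a' b b' ha hb z hz
    intro x hx
    obtain ⟨w, hw, hwY⟩ := hz x (ha hx)
    exact ⟨w, hw, hb hwY⟩
  refine ⟨harrow, ?_, ?_⟩
  · intro B Y
    apply le_antisymm
    · refine le_iInf₂ fun X hX => ?_
      exact harrow.mono (le_sSup hX) le_rfl
    · intro z hz x hx
      rw [LowerSet.mem_sSup_iff] at hx
      obtain ⟨X, hX, hxX⟩ := hx
      have := LowerSet.mem_iInf₂_iff.mp hz X hX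
      exact this x hxX
  ·
    constructor
    · rintro a b ⟨p, hp, hpa⟩ hab
      exact ⟨p, hp, hab hpa⟩
    · rintro a b ⟨p, hp, hpab⟩ ⟨q, hq, hqa⟩
      obtain ⟨w, hw, hwb⟩ := hpab q hqa
      exact ⟨w, Q.filt_app hp hq hw, hwb⟩
    · refine ⟨Q.k, Q.k_mem, ?_⟩
      rw [kC, LowerSet.mem_iInf₂_iff]
      intro a b x hx
      obtain ⟨ka, hka, _⟩ := Q.k_spec x x
      refine ⟨ka, hka, fun y hy => ?_⟩
      obtain ⟨ka', hka', h2⟩ := Q.k_spec x y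
      rw [hka] at hka'
      obtain rfl : ka' = ka := Option.some.inj hka'.symm
      exact ⟨x, h2, hx⟩
    · refine ⟨Q.s, Q.s_mem, ?_⟩
      rw [sC]
      simp only [LowerSet.mem_iInf_iff]
      intro a b c f hf
      obtain ⟨sf, sff, hsf, _⟩ := Q.s_def f f
      refine ⟨sf, hsf, fun g hg => ?_⟩
      obtain ⟨sf', sfg, hsf', hsfg⟩ := Q.s_def f g
      rw [hsf] at hsf'
      obtain rfl : sf' = sf := Option.some.inj hsf'.symm
      refine ⟨sfg, hsfg, fun u hu => ?_⟩
      obtain ⟨fu, hfu, hfu'⟩ := hf u hu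
      obtain ⟨gu, hgu, hgu'⟩ := hg u hu
      obtain ⟨w, hw, hw'⟩ := hfu' gu hgu'
      obtain ⟨y, hy, hyw⟩ := Q.s_spec hfu hgu hw hsf hsfg
      exact ⟨y, hy, c.lower hyw hw'⟩
    · -- the 𝐚 combinator
      -- term t(z, w) = s · (s · (k·z) · (k·w)) · (s·k·k), with z = var 1, w = var 0
      set I : Tm P := .app (.app (.cst Q.s) (.cst Q.k)) (.cst Q.k) with hI
      set T : Tm P := .app (.app (.cst Q.s)
        (.app (.app (.cst Q.s) (.app (.cst Q.k) (.var 1))) (.app (.cst Q.k) (.var 0)))) I with hT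
      set E : Tm P := (T.abs Q).abs Q with hE
      have hgood : E.Good Q :=
        abs_good Q _ (abs_good Q T ⟨⟨Q.s_mem, ⟨⟨Q.s_mem, ⟨Q.k_mem, trivial⟩⟩,
          ⟨Q.k_mem, trivial⟩⟩⟩, ⟨⟨Q.s_mem, Q.k_mem⟩, Q.k_mem⟩⟩)
      obtain ⟨e, he⟩ := abs_defined Q (T.abs Q) (fun _ => Q.k)
      refine ⟨e, eval_good Q E hgood _ (fun _ => Q.k_mem) he, ?_⟩
      rw [aC]
      simp only [LowerSet.mem_iInf_iff]
      intro x B hB z hz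
      -- evaluate T in the environment [w := ?, z]
      -- first apply e to z
      obtain ⟨v, hv⟩ := abs_defined Q T (envCons z fun _ => Q.k)
      obtain ⟨m, w1, hm, hmz, hw1⟩ := abs_beta Q (T.abs Q) (fun _ => Q.k) z hv
      rw [he] at hm
      obtain rfl : m = e := Option.some.inj hm.symm
      refine ⟨w1, hmz, fun w hw => ?_⟩
      -- evaluate T at [w, z]
      obtain ⟨kz, hkz, _⟩ := Q.k_spec z z
      obtain ⟨kw, hkw, _⟩ := Q.k_spec w w
      obtain ⟨skz, A, hskz, hA⟩ := Q.s_def kz kw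
      obtain ⟨sA, t, hsA, ht⟩ := Q.s_def A i0
      have hevalT : T.eval Q (envCons w (envCons z fun _ => Q.k)) = some t := by
        simp [hT, hI, Tm.eval, envCons, hkz, hkw, hskz, hA, hsk0, hi0, hsA, ht]
      obtain ⟨v', w2, hv', hvw, hw2⟩ := abs_beta Q T (envCons z fun _ => Q.k) w hevalT
      rw [hv] at hv'
      obtain rfl : v' = v := Option.some.inj hv'.symm
      -- w1 ≤ v, so w1 · w is defined and ≤ w2 ≤ t
      obtain ⟨u, hu, huw2⟩ := Q.mono hvw hw1 le_rfl
      refine ⟨u, hu, ?_⟩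
      have hut : u ≤ t := huw2.trans hw2
      -- show u ∈ sInf B
      rw [LowerSet.mem_sInf_iff]
      intro b hb
      obtain ⟨⟨p, q⟩, rfl⟩ := hB hb
      -- show u ∈ pcaArr Q p q
      intro r hr
      -- z ∈ arr x (arr p q), w ∈ x
      have hzb := LowerSet.mem_iInf₂_iff.mp hz _ hb
      obtain ⟨zw, hzw, hzwb⟩ := hzb w hw
      obtain ⟨r1, hr1, hr1q⟩ := hzwb r hr
      -- compute t · r ≤ r1
      obtain ⟨kz', hkz', hkzr⟩ := Q.k_spec z r
      rw [hkz] at hkz'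
      obtain rfl : kz' = kz := Option.some.inj hkz'.symm
      obtain ⟨kw', hkw', hkwr⟩ := Q.k_spec w r
      rw [hkw] at hkw'
      obtain rfl : kw' = kw := Option.some.inj hkw'.symm
      obtain ⟨a', ha', ha'zw⟩ := Q.s_spec hkzr hkwr hzw hskz hA
      obtain ⟨i', hi', hi'r⟩ := skk_app Q hsk0 hi0 r
      obtain ⟨x', hx', hx'r1⟩ := Q.mono hr1 ha'zw hi'r
      obtain ⟨y, hy, hyx'⟩ := Q.s_spec ha' hi' hx' hsA ht
      obtain ⟨y', hy', hy'y⟩ := Q.mono hy hut le_rfl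
      exact ⟨y', hy', q.lower ((hy'y.trans hyx').trans hx'r1) hr1q⟩
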